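/- The trace of the twisted cyclic shift c_φ on the d-th tensor power V^{⊗d} equals the trace of φ on V. -/

import Mathlib

open scoped TensorProduct

open PiTensorProduct

open Module

section Aux

variable {k V : Type*} [Field k] [AddCommGroup V] [Module k V]
  {ι : Type*} [Fintype ι] [DecidableEq ι] {d : ℕ} (b : Basis ι k V)

/-- coordinate functional on the tensor power. -/
noncomputable def tpCoord (f : Fin d → ι) : (⨂[k] _ : Fin d, V) →ₗ[k] k :=
  PiTensorProduct.lift
    ((MultilinearMap.mkPiAlgebra k (Fin d) k).compLinearMap fun i => b.coord (f i))

lemma tpCoord_tprod (f : Fin d → ι) (v : Fin d → V) :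
    tpCoord b f (tprod k v) = ∏ i, b.repr (v i) (f i) := by
  simp [tpCoord, MultilinearMap.compLinearMap_apply, Basis.coord_apply]

/-- expansion of a pure tensor in the basis tensors. -/
lemma tprod_expand (v : Fin d → V) :
    (tprod k v : ⨂[k] _ : Fin d, V) =
      ∑ f : Fin d → ι, (∏ i, b.repr (v i) (f i)) • tprod k (fun i => b (f i)) := by
  conv_lhs => rw [show v = fun i => ∑ j : ι, b.repr (v i) j • b j by
    funext i
    rw [← b.sum_repr (v i)]
    simp [Finsupp.sum_fintype]]
  rw [MultilinearMap.map_sum (PiTensorProduct.tprod k) (fun i j => b.repr (v i) j • b j)]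
  refine Finset.sum_congr rfl fun f _ => ?_
  rw [MultilinearMap.map_smul_univ]

/-- the forward map to functions. -/
noncomputable def tpToFun : (⨂[k] _ : Fin d, V) →ₗ[k] ((Fin d → ι) → k) :=
  LinearMap.pi fun f => tpCoord b f

/-- the backward map. -/
noncomputable def tpOfFun : ((Fin d → ι) → k) →ₗ[k] (⨂[k] _ : Fin d, V) where
  toFun g := ∑ f : Fin d → ι, g f • tprod k (fun i => b (f i))
  map_add' g₁ g₂ := by simp [add_smul, Finset.sum_add_distrib]
  map_smul' r g := by simp [Finset.smul_sum, smul_smul]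

lemma tpCoord_tprod_basis (f f' : Fin d → ι) :
    tpCoord b f (tprod k (fun i => b (f' i))) = if f' = f then 1 else 0 := by
  rw [tpCoord_tprod]
  by_cases h : f' = f
  · subst h
    rw [if_pos rfl]
    refine Finset.prod_eq_one fun i _ => ?_
    simp [Basis.repr_self]
  · rw [if_neg h]
    obtain ⟨i, hi⟩ := Function.ne_iff.mp h
    refine Finset.prod_eq_zero (Finset.mem_univ i) ?_
    simp [Basis.repr_self, Finsupp.single_apply, hi]

lemma tpToFun_tpOfFun (g : (Fin d → ι) → k) : tpToFun b (tpOfFun b g) = g := by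
  funext f
  simp only [tpToFun, tpOfFun, LinearMap.pi_apply, LinearMap.coe_mk, AddHom.coe_mk,
    map_sum, map_smul, tpCoord_tprod_basis, smul_eq_mul, mul_ite, mul_one, mul_zero]
  simp

lemma tpOfFun_tpToFun (x : ⨂[k] _ : Fin d, V) : tpOfFun b (tpToFun b x) = x := by
  have : (tpOfFun b).comp (tpToFun b) = (LinearMap.id : (⨂[k] _ : Fin d, V) →ₗ[k] _) := by
    ext v
    simp only [LinearMap.compMultilinearMap_apply, LinearMap.coe_comp, Function.comp_apply,
      LinearMap.id_coe, id_eq]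
    rw [show (tpToFun b) (tprod k v) = fun f => ∏ i, b.repr (v i) (f i) by
      funext f; simp [tpToFun, tpCoord_tprod]]
    rw [tprod_expand b v]
    simp [tpOfFun]
  exact DFunLike.congr_fun this x

/-- basis of the tensor power. -/
noncomputable def tpBasis : Basis (Fin d → ι) k (⨂[k] _ : Fin d, V) :=
  Basis.ofRepr <| LinearEquiv.ofLinear
    ((Finsupp.linearEquivFunOnFinite k k (Fin d → ι)).symm.toLinearMap ∘ₗ tpToFun b)
    (tpOfFun b ∘ₗ (Finsupp.linearEquivFunOnFinite k k (Fin d → ι)).toLinearMap)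
    (by
      refine LinearMap.ext fun g => ?_
      simp only [LinearMap.coe_comp, Function.comp_apply, LinearEquiv.coe_coe,
        LinearMap.id_coe, id_eq]
      rw [tpToFun_tpOfFun]
      exact (Finsupp.linearEquivFunOnFinite k k _).symm_apply_apply g)
    (by
      refine LinearMap.ext fun x => ?_
      simp only [LinearMap.coe_comp, Function.comp_apply, LinearEquiv.coe_coe,
        LinearMap.id_coe, id_eq]
      rw [(Finsupp.linearEquivFunOnFinite k k _).apply_symm_apply, tpOfFun_tpToFun])

lemma tpBasis_repr_apply (x : ⨂[k] _ : Fin d, V) (f : Fin d → ι) :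
    (tpBasis b).repr x f = tpCoord b f x := rfl

lemma tpBasis_apply (f : Fin d → ι) :
    tpBasis b f = tprod k (fun i => b (f i)) := by
  rw [Basis.apply_eq_iff]
  ext f'
  rw [tpBasis_repr_apply, tpCoord_tprod_basis, Finsupp.single_apply]

end Aux

/-- Let `k` be a field, `V` a finite-dimensional `k`-vector space, `d ≥ 1`,
and `φ : V → V` a `k`-linear endomorphism.  The twisted cyclic shift `c_φ` on `V^{⊗d}`,
determined on elementary tensors by `c_φ(v₁ ⊗ ⋯ ⊗ v_d) = v₂ ⊗ ⋯ ⊗ v_d ⊗ φ(v₁)` (indices here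
are `0, …, d−1`), has trace equal to the trace of `φ` on `V`. -/
theorem stmt_10 {k V : Type*} [Field k] [AddCommGroup V] [Module k V]
    [FiniteDimensional k V] (d : ℕ) (hd : 1 ≤ d) (φ : V →ₗ[k] V)
    (c : (⨂[k] _ : Fin d, V) →ₗ[k] ⨂[k] _ : Fin d, V)
    (hc : ∀ v : Fin d → V,
      c (PiTensorProduct.tprod k v) =
        PiTensorProduct.tprod k fun i : Fin d =>
          if h : (i : ℕ) + 1 = d then φ (v ⟨0, by omega⟩)
          else v ⟨(i : ℕ) + 1, by have := i.isLt; omega⟩) :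
    LinearMap.trace k (⨂[k] _ : Fin d, V) c = LinearMap.trace k V φ := by
  classical
  set n := Module.finrank k V
  set b : Basis (Fin n) k V := Module.finBasis k V
  set B := tpBasis (d := d) b
  -- the diagonal entry function
  set F : (Fin d → Fin n) → k := fun f => ∏ i : Fin d,
    b.repr (if h : (i : ℕ) + 1 = d then φ (b (f ⟨0, by omega⟩))
      else b (f ⟨(i : ℕ) + 1, by have := i.isLt; omega⟩)) (f i) with hF
  have htr : LinearMap.trace k (⨂[k] _ : Fin d, V) c = ∑ f : Fin d → Fin n, F f := by
    rw [LinearMap.trace_eq_matrix_trace k B c, Matrix.trace]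
    refine Finset.sum_congr rfl fun f _ => ?_
    rw [Matrix.diag_apply, LinearMap.toMatrix_apply, tpBasis_repr_apply, tpBasis_apply,
      hc, tpCoord_tprod]
  have htrφ : LinearMap.trace k V φ = ∑ j : Fin n, b.repr (φ (b j)) j := by
    rw [LinearMap.trace_eq_matrix_trace k b φ, Matrix.trace]
    refine Finset.sum_congr rfl fun j _ => ?_
    rw [Matrix.diag_apply, LinearMap.toMatrix_apply]
  rw [htr, htrφ]
  -- non-constant functions contribute 0
  have hzero : ∀ f : Fin d → Fin n, (¬ ∃ j, f = Function.const (Fin d) j) → F f = 0 := by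
    intro f hf
    -- there's a consecutive disagreement
    have hcons : ∃ (i : Fin d) (h : (i : ℕ) + 1 < d),
        f ⟨(i : ℕ) + 1, h⟩ ≠ f i := by
      by_contra hcon
      push_neg at hcon
      apply hf
      refine ⟨f ⟨0, by omega⟩, ?_⟩
      funext i
      obtain ⟨m, hm⟩ := i
      induction m with
      | zero => rfl
      | succ p ih =>
        have hp : p < d := by omega
        have := hcon ⟨p, hp⟩ (by simpa using hm)
        simp only [Function.const_apply] at *
        rw [this, ih hp]
    obtain ⟨i, h, hne⟩ := hcons
    refine Finset.prod_eq_zero (Finset.mem_univ i) ?_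
    rw [dif_neg (by omega)]
    simp [Basis.repr_self, Finsupp.single_apply, hne]
  have himage : ∑ f : Fin d → Fin n, F f
      = ∑ f ∈ Finset.univ.image (fun j : Fin n => Function.const (Fin d) j), F f := by
    refine (Finset.sum_subset (Finset.subset_univ _) fun f _ hf => ?_).symm
    refine hzero f fun ⟨j, hj⟩ => hf ?_
    exact Finset.mem_image.mpr ⟨j, Finset.mem_univ j, hj.symm⟩
  have hinj : Function.Injective (fun j : Fin n => Function.const (Fin d) j) := by
    intro a b hab
    have := congr_fun hab ⟨0, by omega⟩
    simpa using this
  rw [himage, Finset.sum_image (fun a _ b _ h => hinj h)]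
  refine Finset.sum_congr rfl fun j _ => ?_
  -- F (const j) = repr (φ (b j)) j
  rw [hF]
  refine Finset.prod_eq_single_of_mem ⟨d - 1, by omega⟩ (Finset.mem_univ _) ?_ |>.trans ?_
  · intro i _ hi
    have : (i : ℕ) + 1 ≠ d := by
      intro h
      apply hi
      refine Fin.ext ?_
      show (i : ℕ) = d - 1
      omega
    rw [dif_neg this]
    simp [Basis.repr_self]
  · rw [dif_pos (show ((⟨d - 1, by omega⟩ : Fin d) : ℕ) + 1 = d by
      show d - 1 + 1 = d; omega)]
    rfl
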